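/- Let α: A → L be the inclusion of a nonzero submodule, 0 → A → M' →ν N → 0 a short exact sequence with class Ψ ∈ Ext¹(N,A), and 0 → L →ι M →π N → 0 its pushout along α with induced map α': M' → M. Then α' is injective, and the map Hom_Λ(N, L/A) → {B ⊆ M : ι⁻¹(B) = A, π(B) = N}, φ ↦ {ι(l) + α'(m) : (l,m) ∈ L × M', β(l) = φ(ν(m))}, is a bijection, where β: L → L/A is the projection. -/

import Mathlib

/- STATEMENT 16: Let α : A → L be the inclusion of a nonzero submodule,
0 → A → M' →ν N → 0 a short exact sequence, and 0 → L →ι M →π N → 0 its pushout along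
α, with induced map α' : M' → M. Then α' is injective, and
φ ↦ {ι(l) + α'(m) : β(l) = φ(ν(m))} (with β : L → L/A the projection) is a bijection
from Hom_Λ(N, L/A) onto the set of submodules B ⊆ M with ι⁻¹(B) = A and π(B) = N. -/

universe u

/-- The subset of M associated to φ : N → L/A; the claim includes that it is
(the underlying set of) a submodule. -/
def pushSet {Λ : Type u} [Ring Λ] {L M M' N : Type u}
    [AddCommGroup L] [Module Λ L] [AddCommGroup M] [Module Λ M]
    [AddCommGroup M'] [Module Λ M'] [AddCommGroup N] [Module Λ N]
    (A : Submodule Λ L) (ι : L →ₗ[Λ] M) (α' : M' →ₗ[Λ] M) (ν : M' →ₗ[Λ] N)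
    (φ : N →ₗ[Λ] L ⧸ A) : Set M :=
  {x : M | ∃ (l : L) (m : M'), A.mkQ l = φ (ν m) ∧ x = ι l + α' m}

theorem stmt16 (k : Type u) [Field k]
    (Λ : Type u) [Ring Λ] [Algebra k Λ] [FiniteDimensional k Λ]
    (L M M' N : Type u)
    [AddCommGroup L] [Module Λ L] [AddCommGroup M] [Module Λ M]
    [AddCommGroup M'] [Module Λ M'] [AddCommGroup N] [Module Λ N]
    -- the nonzero submodule A of L
    (A : Submodule Λ L) (hA : A ≠ ⊥)
    -- the short exact sequence 0 → A → M' →ν N → 0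
    (ιA : A →ₗ[Λ] M') (ν : M' →ₗ[Λ] N)
    (hιA : Function.Injective ιA) (hν : Function.Surjective ν)
    (hexact' : LinearMap.range ιA = LinearMap.ker ν)
    -- its pushout 0 → L →ι M →π N → 0 along the inclusion α = A.subtype
    (ι : L →ₗ[Λ] M) (π : M →ₗ[Λ] N) (α' : M' →ₗ[Λ] M)
    (hι : Function.Injective ι) (hπ : Function.Surjective π)
    (hexact : LinearMap.range ι = LinearMap.ker π)
    (hcomm₁ : α' ∘ₗ ιA = ι ∘ₗ A.subtype) (hcomm₂ : π ∘ₗ α' = ν) :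
    Function.Injective α' ∧
    -- each pushSet φ is a submodule B with ι⁻¹(B) = A and π(B) = N
    (∀ φ : N →ₗ[Λ] L ⧸ A, ∃ B : Submodule Λ M,
        (B : Set M) = pushSet A ι α' ν φ ∧
        Submodule.comap ι B = A ∧ Submodule.map π B = ⊤) ∧
    -- the assignment φ ↦ pushSet φ is injective
    (∀ φ ψ : N →ₗ[Λ] L ⧸ A, pushSet A ι α' ν φ = pushSet A ι α' ν ψ → φ = ψ) ∧
    -- and it hits every submodule B with ι⁻¹(B) = A and π(B) = N
    (∀ B : Submodule Λ M, Submodule.comap ι B = A → Submodule.map π B = ⊤ →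
        ∃ φ : N →ₗ[Λ] L ⧸ A, (B : Set M) = pushSet A ι α' ν φ) := by
  -- basic consequences
  have hπι : ∀ l : L, π (ι l) = 0 := by
    intro l
    have : ι l ∈ LinearMap.ker π := hexact ▸ LinearMap.mem_range_self ι l
    exact this
  have hc1 : ∀ a : A, α' (ιA a) = ι (a : L) := fun a => LinearMap.congr_fun hcomm₁ a
  have hc2 : ∀ m : M', π (α' m) = ν m := fun m => LinearMap.congr_fun hcomm₂ m
  -- the intersection fact: ι l = α' m → l ∈ A (and m ∈ range ιA)
  have hkey : ∀ (l : L) (m : M'), ι l = α' m → l ∈ A ∧ ∃ a : A, m = ιA a ∧ (a : L) = l := by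
    intro l m h
    have hνm : ν m = 0 := by rw [← hc2, ← h, hπι]
    have hm : m ∈ LinearMap.range ιA := by rw [hexact']; exact hνm
    obtain ⟨a, ha⟩ := hm
    have : ι (a : L) = ι l := by rw [← hc1, ha, h]
    have hal : (a : L) = l := hι this
    exact ⟨hal ▸ a.2, a, ha.symm, hal⟩
  -- decomposition: every x ∈ M is ι l + α' m
  have hdecomp : ∀ x : M, ∃ (l : L) (m : M'), x = ι l + α' m := by
    intro x
    obtain ⟨m, hm⟩ := hν (π x)
    have : x - α' m ∈ LinearMap.ker π := by
      simp [LinearMap.mem_ker, map_sub, hc2, hm]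
    rw [← hexact] at this
    obtain ⟨l, hl⟩ := this
    exact ⟨l, m, by rw [hl]; abel⟩
  -- injectivity of α'
  have hα'inj : Function.Injective α' := by
    rw [injective_iff_map_eq_zero]
    intro m hm
    have hνm : ν m = 0 := by rw [← hc2, hm, map_zero]
    have : m ∈ LinearMap.range ιA := by rw [hexact']; exact hνm
    obtain ⟨a, ha⟩ := this
    have : ι (a : L) = 0 := by rw [← hc1, ha, hm]
    have ha0 : (a : L) = 0 := hι (by simpa using this)
    have : a = 0 := Subtype.ext ha0
    rw [← ha, this, map_zero]
  refine ⟨hα'inj, ?_, ?_, ?_⟩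
  · -- part 2: pushSet φ is a submodule with the required properties
    intro φ
    set g : L × M' →ₗ[Λ] M := ι ∘ₗ LinearMap.fst Λ L M' + α' ∘ₗ LinearMap.snd Λ L M' with hg
    have hgapp : ∀ p : L × M', g p = ι p.1 + α' p.2 := fun p => rfl
    set S : Submodule Λ (L × M') :=
      LinearMap.ker (A.mkQ ∘ₗ LinearMap.fst Λ L M' - φ ∘ₗ ν ∘ₗ LinearMap.snd Λ L M') with hS
    have hSmem : ∀ p : L × M', p ∈ S ↔ A.mkQ p.1 = φ (ν p.2) := by
      intro p
      simp [hS, LinearMap.mem_ker, sub_eq_zero]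
    refine ⟨Submodule.map g S, ?_, ?_, ?_⟩
    · ext x
      simp only [Submodule.map_coe, Set.mem_image, SetLike.mem_coe, pushSet, Set.mem_setOf_eq]
      constructor
      · rintro ⟨⟨l, m⟩, hp, rfl⟩
        exact ⟨l, m, (hSmem _).mp hp, (hgapp _)⟩
      · rintro ⟨l, m, h1, rfl⟩
        exact ⟨⟨l, m⟩, (hSmem _).mpr h1, hgapp _⟩
    · -- comap ι B = A
      ext l
      simp only [Submodule.mem_comap, Submodule.mem_map]
      constructor
      · rintro ⟨⟨l', m⟩, hp, heq⟩
        rw [hgapp] at heq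
        have hS' := (hSmem _).mp hp
        have : ι (l - l') = α' m := by rw [map_sub, ← heq]; abel
        obtain ⟨hll', a, ham, hal⟩ := hkey _ _ this
        have hνm : ν m = 0 := by
          rw [ham, ← hc2, hc1, hπι]
        rw [hνm, map_zero] at hS'
        have hl' : l' ∈ A := (Submodule.Quotient.mk_eq_zero A).mp hS'
        have : l = (l - l') + l' := by abel
        rw [this]
        exact A.add_mem hll' hl'
      · intro hl
        refine ⟨⟨l, 0⟩, ?_, by rw [hgapp]; simp⟩
        rw [hSmem]
        simp [(Submodule.Quotient.mk_eq_zero A).mpr hl]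
    · -- map π B = ⊤
      rw [Submodule.eq_top_iff']
      intro n
      obtain ⟨m, hm⟩ := hν n
      obtain ⟨l, hl⟩ := A.mkQ_surjective (φ n)
      refine ⟨g ⟨l, m⟩, Submodule.mem_map_of_mem ((hSmem _).mpr (by rw [hl, hm])), ?_⟩
      rw [hgapp]
      simp [map_add, hπι, hc2, hm]
  · -- part 3: injectivity of φ ↦ pushSet φ
    intro φ ψ h
    ext n
    obtain ⟨m, hm⟩ := hν n
    obtain ⟨l, hl⟩ := A.mkQ_surjective (φ n)
    have hx : ι l + α' m ∈ pushSet A ι α' ν φ := ⟨l, m, by rw [hl, hm], rfl⟩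
    rw [h] at hx
    obtain ⟨l', m', h1, h2⟩ := hx
    have : ι (l - l') = α' (m' - m) := by
      rw [map_sub, map_sub]
      rw [sub_eq_sub_iff_add_eq_add]
      rw [add_comm (ι l)] at h2
      linear_combination (norm := module) h2
    obtain ⟨hll', a, ham, hal⟩ := hkey _ _ this
    have hνm' : ν m' = ν m := by
      have : ν (m' - m) = 0 := by rw [ham, ← hc2, hc1, hπι]
      have := sub_eq_zero.mp (by rwa [map_sub] at this)
      exact this
    have hmkq : A.mkQ l = A.mkQ l' := by
      rw [← sub_eq_zero, ← map_sub, Submodule.mkQ_apply, Submodule.Quotient.mk_eq_zero]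
      exact hll'
    rw [← hl, hmkq, h1, hνm', hm]
  · -- part 4: surjectivity
    intro B hB1 hB2
    set g : L × M' →ₗ[Λ] M := ι ∘ₗ LinearMap.fst Λ L M' + α' ∘ₗ LinearMap.snd Λ L M' with hg
    have hgapp : ∀ p : L × M', g p = ι p.1 + α' p.2 := fun p => rfl
    set S : Submodule Λ (L × M') := Submodule.comap g B with hS
    set q : S →ₗ[Λ] N := π ∘ₗ g ∘ₗ S.subtype with hq
    have hqapp : ∀ s : S, q s = π (g (s : L × M')) := fun s => rfl
    have hqsurj : Function.Surjective q := by
      intro n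
      have : n ∈ Submodule.map π B := hB2 ▸ Submodule.mem_top
      obtain ⟨b, hb, hbn⟩ := this
      obtain ⟨l, m, hlm⟩ := hdecomp b
      refine ⟨⟨⟨l, m⟩, ?_⟩, ?_⟩
      · simp only [hS, Submodule.mem_comap]; rw [hgapp]; rw [← hlm]; exact hb
      · rw [hqapp]; rw [hgapp]; dsimp; rw [← hlm]; exact hbn
    set f0 : S →ₗ[Λ] L ⧸ A := A.mkQ ∘ₗ (LinearMap.fst Λ L M') ∘ₗ S.subtype with hf0
    have hf0app : ∀ s : S, f0 s = A.mkQ (s : L × M').1 := fun s => rfl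
    have hker : LinearMap.ker q ≤ LinearMap.ker f0 := by
      rintro ⟨⟨l, m⟩, hs⟩ hq0
      have hπ0 : π (ι l + α' m) = 0 := hq0
      have hνm : ν m = 0 := by
        have := hπ0
        rw [map_add, hπι, hc2, zero_add] at this
        exact this
      have : m ∈ LinearMap.range ιA := by rw [hexact']; exact hνm
      obtain ⟨a, ha⟩ := this
      have hmem : ι l + α' m ∈ B := hs
      have : ι l + α' m = ι (l + (a : L)) := by rw [map_add, ← hc1, ha]
      rw [this] at hmem
      have hla : l + (a : L) ∈ A := hB1.le (Submodule.mem_comap.mpr hmem)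
      have hl : l ∈ A := by
        have : l = (l + (a : L)) - (a : L) := by abel
        rw [this]; exact A.sub_mem hla a.2
      show f0 _ = 0
      rw [hf0app]
      exact (Submodule.Quotient.mk_eq_zero A).mpr hl
    set e := q.quotKerEquivOfSurjective hqsurj with he
    set φ : N →ₗ[Λ] L ⧸ A :=
      ((LinearMap.ker q).liftQ f0 hker) ∘ₗ (e.symm : N →ₗ[Λ] S ⧸ LinearMap.ker q) with hφ
    have hφq : ∀ s : S, φ (q s) = f0 s := by
      intro s
      have h1 : e (Submodule.Quotient.mk s) = q s := rfl
      have h2 : e.symm (q s) = Submodule.Quotient.mk s := by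
        rw [← h1, LinearEquiv.symm_apply_apply]
      show ((LinearMap.ker q).liftQ f0 hker) (e.symm (q s)) = f0 s
      rw [h2, Submodule.liftQ_apply]
    refine ⟨φ, ?_⟩
    ext x
    simp only [SetLike.mem_coe, pushSet, Set.mem_setOf_eq]
    constructor
    · -- B ⊆ pushSet φ
      intro hx
      obtain ⟨l, m, hlm⟩ := hdecomp x
      set s : S := ⟨⟨l, m⟩, by simp only [hS, Submodule.mem_comap]; rw [hgapp]; exact hlm ▸ hx⟩
      refine ⟨l, m, ?_, hlm⟩
      have hqs : q s = ν m := by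
        rw [hqapp, hgapp]; show π (ι l + α' m) = ν m; rw [map_add, hπι, hc2, zero_add]
      have := hφq s
      rw [hqs] at this
      rw [this, hf0app]
    · -- pushSet φ ⊆ B
      rintro ⟨l, m, h1, rfl⟩
      obtain ⟨s, hqs⟩ := hqsurj (ν m)
      obtain ⟨⟨l₀, m₀⟩, hs₀⟩ := s
      have hgs : ι l₀ + α' m₀ ∈ B := hs₀
      have hφν : φ (ν m) = A.mkQ l₀ := by
        rw [← hqs, hφq]; rfl
      have hqval : π (ι l₀ + α' m₀) = ν m := hqs
      have hνm₀ : ν m₀ = ν m := by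
        rw [map_add, hπι, hc2, zero_add] at hqval
        exact hqval
      have hν0 : ν (m - m₀) = 0 := by rw [map_sub, hνm₀, sub_self]
      have : m - m₀ ∈ LinearMap.range ιA := by rw [hexact']; exact hν0
      obtain ⟨a, ha⟩ := this
      have hα'sub : α' (m - m₀) = ι (a : L) := by rw [← ha, hc1]
      have hll₀ : l - l₀ ∈ A := by
        have : A.mkQ (l - l₀) = 0 := by
          rw [map_sub, h1, hφν, sub_self]
        exact (Submodule.Quotient.mk_eq_zero A).mp this
      have hm' : α' m = α' m₀ + ι (a : L) := by
        rw [← hα'sub, ← map_add]; congr 1; abel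
      have hrw : ι l + α' m = (ι l₀ + α' m₀) + ι ((l - l₀) + (a : L)) := by
        rw [hm', map_add, map_sub]; abel
      rw [hrw]
      refine B.add_mem hgs ?_
      have : (l - l₀) + (a : L) ∈ A := A.add_mem hll₀ a.2
      exact Submodule.mem_comap.mp (hB1.ge this)
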